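/- Let a, b ∈ ℝ^d, ε > 0, and let t_1 ≤ t_2 ≤ … ≤ t_m be real numbers in [0,1] (m ≥ 2). Let v_1, …, v_m ∈ ℝ^d be points such that dist(v_j, (1−t_j)·a + t_j·b) ≤ ε for every j. Then the Fréchet distance between the polygonal curve with vertices v_1, …, v_m and the segment from (1−t_1)·a + t_1·b to (1−t_m)·a + t_m·b is at most ε. -/

import Mathlib

open Set Metric

noncomputable section

/-- Euclidean space ℝ^d. -/
abbrev Euc (d : ℕ) := EuclideanSpace ℝ (Fin d)

/-- A pair of continuous nondecreasing surjections from `[0,1]` onto `[0,1]`. -/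
def IsReparamPair (σ τ : ℝ → ℝ) : Prop :=
  ContinuousOn σ (Set.Icc 0 1) ∧ MonotoneOn σ (Set.Icc 0 1) ∧
    σ '' Set.Icc 0 1 = Set.Icc 0 1 ∧
  ContinuousOn τ (Set.Icc 0 1) ∧ MonotoneOn τ (Set.Icc 0 1) ∧
    τ '' Set.Icc 0 1 = Set.Icc 0 1

/-- The Fréchet distance between two curves `[0,1] → ℝ^d`. -/
noncomputable def frechetDist {d : ℕ} (P Q : ℝ → Euc d) : ℝ :=
  sInf {r : ℝ | ∃ σ τ : ℝ → ℝ, IsReparamPair σ τ ∧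
    r = ⨆ t : Set.Icc (0 : ℝ) 1, dist (P (σ t)) (Q (τ t))}

/-- The polygonal curve with vertices `q 0, …, q n` (so `n` segments),
linearly parametrizing the segment from `q j` to `q (j+1)` on `[j/n, (j+1)/n]`. -/
noncomputable def polyCurve {d : ℕ} (q : ℕ → Euc d) (n : ℕ) (t : ℝ) : Euc d :=
  let j : ℕ := min (⌊t * n⌋.toNat) (n - 1)
  (1 - (t * n - j)) • q j + (t * n - j) • q (j + 1)

/-- The segment from `a` to `b` as a curve on `[0,1]`. -/
def segCurve {d : ℕ} (a b : Euc d) (t : ℝ) : Euc d := (1 - t) • a + t • b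

/-! ### Auxiliary development -/

/-- Generic piecewise-linear curve, no `let`. -/
noncomputable def pcAux {E : Type*} [AddCommGroup E] [Module ℝ E]
    (q : ℕ → E) (n : ℕ) (t : ℝ) : E :=
  (1 - (t * n - (min (⌊t * n⌋.toNat) (n - 1) : ℕ))) • q (min (⌊t * n⌋.toNat) (n - 1))
    + (t * n - (min (⌊t * n⌋.toNat) (n - 1) : ℕ)) • q (min (⌊t * n⌋.toNat) (n - 1) + 1)

lemma polyCurve_eq_pcAux {d : ℕ} (q : ℕ → Euc d) (n : ℕ) (t : ℝ) :
    polyCurve q n t = pcAux q n t := rfl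

lemma pc_index_bounds {n : ℕ} (hn : 1 ≤ n) {u : ℝ} (hu : u ∈ Set.Icc (0:ℝ) 1) :
    min (⌊u * n⌋.toNat) (n - 1) + 1 ≤ n ∧
    ((min (⌊u * n⌋.toNat) (n - 1) : ℕ) : ℝ) ≤ u * n ∧
    u * n - ((min (⌊u * n⌋.toNat) (n - 1) : ℕ) : ℝ) ≤ 1 := by
  obtain ⟨hu0, hu1⟩ := hu
  have hn0 : (0:ℝ) ≤ (n:ℝ) := by positivity
  have hun0 : (0:ℝ) ≤ u * n := by positivity
  have hunn : u * n ≤ n := by nlinarith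
  have hfl0 : (0:ℤ) ≤ ⌊u * n⌋ := Int.floor_nonneg.2 hun0
  have htn : ((⌊u * n⌋.toNat : ℕ) : ℝ) = (⌊u * n⌋ : ℝ) := by
    exact_mod_cast congrArg (Int.cast : ℤ → ℝ) (Int.toNat_of_nonneg hfl0)
  refine ⟨by omega, ?_, ?_⟩
  · have h1 : (min (⌊u * n⌋.toNat) (n - 1) : ℕ) ≤ ⌊u * n⌋.toNat := min_le_left _ _
    have h2 : ((min (⌊u * n⌋.toNat) (n - 1) : ℕ) : ℝ) ≤ ((⌊u * n⌋.toNat : ℕ) : ℝ) := by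
      exact_mod_cast h1
    have := Int.floor_le (u * n)
    linarith [htn ▸ h2]
  · rcases le_or_gt (⌊u * n⌋.toNat) (n - 1) with h | h
    · rw [min_eq_left h]
      have := Int.lt_floor_add_one (u * n)
      rw [← htn] at this
      linarith
    · rw [min_eq_right h.le]
      have hflt : n ≤ ⌊u * n⌋.toNat := by omega
      have : ((n:ℕ) : ℝ) ≤ ((⌊u * n⌋.toNat : ℕ) : ℝ) := by exact_mod_cast hflt
      rw [htn] at this
      have hfle : (⌊u * n⌋ : ℝ) ≤ u * n := Int.floor_le _
      have hcast : ((n - 1 : ℕ) : ℝ) = (n : ℝ) - 1 := by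
        have : (1:ℕ) ≤ n := hn
        push_cast [this]
        ring
      rw [hcast]
      linarith

lemma pcAux_dist_le {E : Type*} [NormedAddCommGroup E] [NormedSpace ℝ E]
    {q q' : ℕ → E} {n : ℕ} (hn : 1 ≤ n) {ε : ℝ}
    (h : ∀ j ≤ n, dist (q j) (q' j) ≤ ε)
    {u : ℝ} (hu : u ∈ Set.Icc (0:ℝ) 1) : dist (pcAux q n u) (pcAux q' n u) ≤ ε := by
  obtain ⟨hj1, hl0, hl1⟩ := pc_index_bounds hn hu
  set j0 := min (⌊u * n⌋.toNat) (n - 1) with hj0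
  set l := u * n - (j0 : ℝ) with hl
  have hl0' : 0 ≤ l := by simp [hl]; linarith
  have h1 : ‖q j0 - q' j0‖ ≤ ε := by rw [← dist_eq_norm]; exact h _ (by omega)
  have h2 : ‖q (j0+1) - q' (j0+1)‖ ≤ ε := by rw [← dist_eq_norm]; exact h _ hj1
  have key : pcAux q n u - pcAux q' n u
      = (1 - l) • (q j0 - q' j0) + l • (q (j0+1) - q' (j0+1)) := by
    simp only [pcAux, ← hj0, ← hl, smul_sub]
    abel
  rw [dist_eq_norm, key]
  calc ‖(1 - l) • (q j0 - q' j0) + l • (q (j0+1) - q' (j0+1))‖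
      ≤ ‖(1 - l) • (q j0 - q' j0)‖ + ‖l • (q (j0+1) - q' (j0+1))‖ := norm_add_le _ _
    _ = (1 - l) * ‖q j0 - q' j0‖ + l * ‖q (j0+1) - q' (j0+1)‖ := by
        rw [norm_smul, norm_smul, Real.norm_of_nonneg (by linarith),
          Real.norm_of_nonneg hl0']
    _ ≤ (1 - l) * ε + l * ε := by gcongr <;> linarith
    _ = ε := by ring

lemma pcAux_affine {d : ℕ} (a b : Euc d) (t : ℕ → ℝ) (n : ℕ) (u : ℝ) :
    pcAux (fun j => (1 - t j) • a + t j • b) n u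
      = (1 - pcAux t n u) • a + (pcAux t n u) • b := by
  simp only [pcAux, smul_eq_mul, smul_add, smul_smul]
  module

lemma segCurve_comb {d : ℕ} (a b : Euc d) (t0 t1 s : ℝ) :
    segCurve ((1 - t0) • a + t0 • b) ((1 - t1) • a + t1 • b) s
      = (1 - ((1 - s) * t0 + s * t1)) • a + ((1 - s) * t0 + s * t1) • b := by
  simp only [segCurve, smul_add, smul_smul]
  module

lemma pcAux_zero {E : Type*} [AddCommGroup E] [Module ℝ E] (q : ℕ → E) (n : ℕ) :
    pcAux q n 0 = q 0 := by
  simp [pcAux]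

lemma pcAux_one {E : Type*} [AddCommGroup E] [Module ℝ E] (q : ℕ → E) {n : ℕ}
    (hn : 1 ≤ n) : pcAux q n 1 = q n := by
  have h1 : ((1:ℝ) * n) = ((n : ℤ) : ℝ) := by push_cast; ring
  have h2 : ⌊(1:ℝ) * n⌋ = (n : ℤ) := by rw [h1, Int.floor_intCast]
  have h3 : ⌊(1:ℝ) * n⌋.toNat = n := by rw [h2, Int.toNat_natCast]
  have h4 : min (⌊(1:ℝ) * n⌋.toNat) (n - 1) = n - 1 := by omega
  have h5 : n - 1 + 1 = n := by omega
  have h6 : ((n - 1 : ℕ) : ℝ) = (n : ℝ) - 1 := by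
    push_cast [hn]; ring
  simp only [pcAux, h4, h5, h6]
  have : (1:ℝ) * n - ((n:ℝ) - 1) = 1 := by ring
  rw [this]
  simp

lemma t_chain {n : ℕ} (t : ℕ → ℝ) (ht : ∀ j, j + 1 ≤ n → t j ≤ t (j+1)) :
    ∀ i j, i ≤ j → j ≤ n → t i ≤ t j := by
  intro i j
  induction j with
  | zero =>
    intro hij _
    have : i = 0 := Nat.le_zero.1 hij
    simp [this]
  | succ k ih =>
    intro hij hjn
    rcases eq_or_lt_of_le hij with rfl | h
    · exact le_refl _
    · exact (ih (by omega) (by omega)).trans (ht k (by omega))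

lemma pcAux_eq_sum {n : ℕ} (hn : 1 ≤ n) (t : ℕ → ℝ) {u : ℝ} (hu : u ∈ Set.Icc (0:ℝ) 1) :
    pcAux t n u
      = t 0 + ∑ j ∈ Finset.range n, (t (j+1) - t j) * (min 1 (max 0 (u * n - j))) := by
  obtain ⟨hj1, hl0, hl1⟩ := pc_index_bounds hn hu
  set j0 := min (⌊u * n⌋.toNat) (n - 1) with hj0
  have hsum2 : ∑ j ∈ Finset.Ico (j0+1) n, (t (j+1) - t j) * (min 1 (max 0 (u * n - j))) = 0 := by
    apply Finset.sum_eq_zero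
    intro j hj
    have hj' : j0 + 1 ≤ j := (Finset.mem_Ico.1 hj).1
    have hjr : (j0:ℝ) + 1 ≤ (j:ℝ) := by exact_mod_cast hj'
    have hx : u * n - (j:ℝ) ≤ 0 := by linarith
    rw [max_eq_left hx, min_eq_right zero_le_one, mul_zero]
  have hsum1 : ∀ j ∈ Finset.range j0,
      (t (j+1) - t j) * (min 1 (max 0 (u * n - j))) = t (j+1) - t j := by
    intro j hj
    have hjlt : j < j0 := Finset.mem_range.1 hj
    have hjr : (j:ℝ) + 1 ≤ (j0:ℝ) := by exact_mod_cast hjlt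
    have hx : (1:ℝ) ≤ u * n - (j:ℝ) := by linarith
    rw [max_eq_right (by linarith), min_eq_left hx, mul_one]
  have hterm : min 1 (max 0 (u * n - (j0:ℝ))) = u * n - (j0:ℝ) := by
    rw [max_eq_right (by linarith), min_eq_right hl1]
  calc pcAux t n u
      = (1 - (u * n - (j0:ℝ))) * t j0 + (u * n - (j0:ℝ)) * t (j0 + 1) := by
        simp only [pcAux, ← hj0, smul_eq_mul]
    _ = t 0 + ∑ j ∈ Finset.range n, (t (j+1) - t j) * (min 1 (max 0 (u * n - j))) := by
        rw [Finset.range_eq_Ico, ← Finset.sum_Ico_consecutive _ (Nat.zero_le (j0+1)) hj1,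
          hsum2, add_zero, ← Finset.range_eq_Ico, Finset.sum_range_succ,
          Finset.sum_congr rfl hsum1, Finset.sum_range_sub, hterm]
        ring

lemma frechet_le_of_reparam {d : ℕ} (P Q : ℝ → Euc d) (τ : ℝ → ℝ)
    (hτ : IsReparamPair id τ) {ε : ℝ} (hε : 0 ≤ ε)
    (h : ∀ u ∈ Set.Icc (0:ℝ) 1, dist (P u) (Q (τ u)) ≤ ε) :
    frechetDist P Q ≤ ε := by
  have hbdd : BddBelow {r : ℝ | ∃ σ τ' : ℝ → ℝ, IsReparamPair σ τ' ∧
      r = ⨆ t : Set.Icc (0 : ℝ) 1, dist (P (σ t)) (Q (τ' t))} := by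
    refine ⟨0, ?_⟩
    rintro r ⟨σ, τ', _, rfl⟩
    exact Real.iSup_nonneg fun i => dist_nonneg
  have hmem : (⨆ t : Set.Icc (0 : ℝ) 1, dist (P (id (t:ℝ))) (Q (τ (t:ℝ)))) ∈
      {r : ℝ | ∃ σ τ' : ℝ → ℝ, IsReparamPair σ τ' ∧
        r = ⨆ t : Set.Icc (0 : ℝ) 1, dist (P (σ t)) (Q (τ' t))} :=
    ⟨id, τ, hτ, rfl⟩
  refine le_trans (csInf_le hbdd hmem) (Real.iSup_le (fun i => h i i.2) hε)

/-- If `v 0, …, v (m-1)` are points within `ε` of the points at parameters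
`t 0 ≤ t 1 ≤ … ≤ t (m-1)` of the segment from `a` to `b`, then the polygonal curve on
the `v j` has Fréchet distance at most `ε` from the segment between the first and last
of these parameter points. -/
theorem frechetDist_polyCurve_near_segment_le {d m : ℕ} (hm : 2 ≤ m)
    (a b : Euc d) (ε : ℝ) (hε : 0 < ε) (t : ℕ → ℝ) (v : ℕ → Euc d)
    (hmono : ∀ j, j + 1 ≤ m - 1 → t j ≤ t (j + 1))
    (hmem : ∀ j ≤ m - 1, t j ∈ Set.Icc (0 : ℝ) 1)
    (hdist : ∀ j ≤ m - 1, dist (v j) ((1 - t j) • a + t j • b) ≤ ε) :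
    frechetDist (polyCurve v (m - 1))
      (segCurve ((1 - t 0) • a + t 0 • b) ((1 - t (m - 1)) • a + t (m - 1) • b)) ≤ ε := by
  set n := m - 1 with hndef
  have hn : 1 ≤ n := by omega
  have hchain := t_chain (n := n) t hmono
  set T : ℝ → ℝ := fun u => pcAux t n u with hTdef
  set S : ℝ → ℝ := fun u =>
    t 0 + ∑ j ∈ Finset.range n, (t (j+1) - t j) * (min 1 (max 0 (u * n - j))) with hSdef
  have hTS : Set.EqOn T S (Set.Icc 0 1) := fun u hu => pcAux_eq_sum hn t hu
  have hScont : Continuous S := by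
    apply continuous_const.add
    apply continuous_finset_sum
    intro j _
    have h1 : Continuous fun u : ℝ => u * (n:ℝ) - (j:ℝ) :=
      (continuous_id.mul continuous_const).sub continuous_const
    exact continuous_const.mul (continuous_const.min (continuous_const.max h1))
  have hSmono : Monotone S := by
    intro x y hxy
    simp only [hSdef]
    apply add_le_add le_rfl
    apply Finset.sum_le_sum
    intro j hj
    have hc0 : 0 ≤ t (j+1) - t j :=
      sub_nonneg.2 (hmono j (by simpa using Finset.mem_range.1 hj))
    apply mul_le_mul_of_nonneg_left _ hc0
    have : x * (n:ℝ) - (j:ℝ) ≤ y * (n:ℝ) - (j:ℝ) := by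
      have : x * (n:ℝ) ≤ y * (n:ℝ) :=
        mul_le_mul_of_nonneg_right hxy (by positivity)
      linarith
    exact min_le_min le_rfl (max_le_max le_rfl this)
  have hTcont : ContinuousOn T (Set.Icc 0 1) := hScont.continuousOn.congr hTS
  have hTmono : MonotoneOn T (Set.Icc 0 1) := fun x hx y hy hxy => by
    rw [hTS hx, hTS hy]; exact hSmono hxy
  have hT0 : T 0 = t 0 := pcAux_zero t n
  have hT1 : T 1 = t n := pcAux_one t hn
  have key : ∀ (s u : ℝ), u ∈ Set.Icc (0:ℝ) 1 → (1 - s) * t 0 + s * t n = T u →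
      dist (polyCurve v n u)
        (segCurve ((1 - t 0) • a + t 0 • b) ((1 - t n) • a + t n • b) s) ≤ ε := by
    intro s u hu hc
    rw [polyCurve_eq_pcAux, segCurve_comb, hc]
    simp only [hTdef]
    rw [← pcAux_affine a b t n u]
    exact pcAux_dist_le hn hdist hu
  rcases eq_or_lt_of_le (hchain 0 n (Nat.zero_le n) le_rfl) with heq | hlt
  · -- degenerate: t 0 = t n
    refine frechet_le_of_reparam _ _ id
      ⟨continuousOn_id, monotoneOn_id, Set.image_id _,
       continuousOn_id, monotoneOn_id, Set.image_id _⟩ hε.le ?_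
    intro u hu
    obtain ⟨hj1, hl0, hl1⟩ := pc_index_bounds hn hu
    have e1 : t (min (⌊u * n⌋.toNat) (n - 1)) = t 0 :=
      le_antisymm (heq ▸ hchain _ n (by omega) le_rfl)
        (hchain 0 _ (Nat.zero_le _) (by omega))
    have e2 : t (min (⌊u * n⌋.toNat) (n - 1) + 1) = t 0 :=
      le_antisymm (heq ▸ hchain _ n hj1 le_rfl) (hchain 0 _ (Nat.zero_le _) hj1)
    have hTu : T u = t 0 := by
      simp only [hTdef, pcAux, smul_eq_mul, e1, e2]
      ring
    exact key u u hu (by rw [hTu, ← heq]; ring)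
  · -- nondegenerate: t 0 < t n
    set τ : ℝ → ℝ := fun u => (T u - t 0) / (t n - t 0) with hτdef
    have hne : t n - t 0 ≠ 0 := sub_ne_zero.2 (ne_of_gt hlt)
    have hτ0 : τ 0 = 0 := by simp [hτdef, hT0]
    have hτ1 : τ 1 = 1 := by
      simp only [hτdef, hT1]
      exact div_self hne
    have hτcont : ContinuousOn τ (Set.Icc 0 1) :=
      (hTcont.sub continuousOn_const).div_const _
    have hτmono : MonotoneOn τ (Set.Icc 0 1) := by
      intro x hx y hy hxy
      simp only [hτdef]
      have := hTmono hx hy hxy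
      have hpos : 0 < t n - t 0 := sub_pos.2 hlt
      rw [div_le_div_iff_of_pos_right hpos]
      linarith
    have himg : τ '' Set.Icc 0 1 = Set.Icc 0 1 := by
      apply Set.Subset.antisymm
      · rintro _ ⟨u, hu, rfl⟩
        refine Set.mem_Icc.2 ⟨?_, ?_⟩
        · have := hτmono (Set.left_mem_Icc.2 zero_le_one) hu hu.1
          rwa [hτ0] at this
        · have := hτmono hu (Set.right_mem_Icc.2 zero_le_one) hu.2
          rwa [hτ1] at this
      · have := intermediate_value_Icc zero_le_one hτcont
        rwa [hτ0, hτ1] at this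
    refine frechet_le_of_reparam _ _ τ
      ⟨continuousOn_id, monotoneOn_id, Set.image_id _, hτcont, hτmono, himg⟩ hε.le ?_
    intro u hu
    apply key (τ u) u hu
    have hmul : τ u * (t n - t 0) = T u - t 0 := div_mul_cancel₀ _ hne
    linear_combination hmul

end
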